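/- arXiv:2006.09371 — 6 statements merged into one kernel-verified Lean document; each statement's English description precedes it below -/
import Mathlib

section
/- Let I be a maximal (two-sided) ideal of R. Then either MI = M or MI is a φ-prime submodule of M. -/
open MulOpposite Submodule

variable {R : Type*} [Ring R] {M : Type*} [AddCommGroup M] [Module Rᵐᵒᵖ M]

/-- The product `Y·A` of a set of elements of a right `R`-module `M` and a set of ring
elements: the submodule of all finite sums `Σ yᵢ·aᵢ` with `yᵢ ∈ Y`, `aᵢ ∈ A`. -/
def sProd (Y : Set M) (A : Set R) : Submodule Rᵐᵒᵖ M :=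
  Submodule.span Rᵐᵒᵖ {z | ∃ y ∈ Y, ∃ a ∈ A, z = op a • y}

/-- `(X :_R N) = {r : R | N·r ⊆ X}`. -/
def colR (X : Set M) (N : Set M) : Set R := {r | ∀ m ∈ N, op r • m ∈ X}

/-- `(X :_M A) = {m : M | m·A ⊆ X}`. -/
def colM (X : Set M) (A : Set R) : Set M := {m | ∀ r ∈ A, op r • m ∈ X}

/-- A function `φ : S(M) → S(M) ∪ {∅}` (values are either `∅` or submodules) with
`φ(X) ⊆ X` for every submodule `X`. -/
def GoodPhi (φ : Submodule Rᵐᵒᵖ M → Set M) : Prop :=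
  ∀ N : Submodule Rᵐᵒᵖ M, φ N ⊆ N ∧
    (φ N = (∅ : Set M) ∨ ∃ P : Submodule Rᵐᵒᵖ M, φ N = (P : Set M))

/-- `X` is a φ-prime submodule of the right `R`-module `M`. -/
def PhiPrime (φ : Submodule Rᵐᵒᵖ M → Set M) (X : Submodule Rᵐᵒᵖ M) : Prop :=
  X ≠ ⊤ ∧ ∀ (Y : Submodule Rᵐᵒᵖ M) (I : TwoSidedIdeal R),
    (sProd (Y : Set M) (I : Set R) : Set M) ⊆ (X : Set M) →
    ¬((sProd (Y : Set M) (I : Set R) : Set M) ⊆ φ X) →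
    (Y : Set M) ⊆ (X : Set M) ∨ (I : Set R) ⊆ colR (X : Set M) Set.univ

/-- `X` is a prime submodule of the right `R`-module `M`. -/
def PrimeSub (X : Submodule Rᵐᵒᵖ M) : Prop :=
  X ≠ ⊤ ∧ ∀ (Y : Submodule Rᵐᵒᵖ M) (I : TwoSidedIdeal R),
    (sProd (Y : Set M) (I : Set R) : Set M) ⊆ (X : Set M) →
    (Y : Set M) ⊆ (X : Set M) ∨ (I : Set R) ⊆ colR (X : Set M) Set.univ

/-- `X` is a weakly prime submodule of the right `R`-module `M`. -/
def WeaklyPrime (X : Submodule Rᵐᵒᵖ M) : Prop :=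
  X ≠ ⊤ ∧ ∀ (Y : Submodule Rᵐᵒᵖ M) (I : TwoSidedIdeal R),
    sProd (Y : Set M) (I : Set R) ≠ ⊥ →
    (sProd (Y : Set M) (I : Set R) : Set M) ⊆ (X : Set M) →
    (Y : Set M) ⊆ (X : Set M) ∨ (I : Set R) ⊆ colR (X : Set M) Set.univ

/-- `X` is an almost prime submodule of the right `R`-module `M`. -/
def AlmostPrime (X : Submodule Rᵐᵒᵖ M) : Prop :=
  X ≠ ⊤ ∧ ∀ (Y : Submodule Rᵐᵒᵖ M) (I : TwoSidedIdeal R),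
    (sProd (Y : Set M) (I : Set R) : Set M) ⊆ (X : Set M) →
    ¬((sProd (Y : Set M) (I : Set R) : Set M) ⊆
        (sProd (X : Set M) ((colR (X : Set M) Set.univ : Set R)) : Set M)) →
    (Y : Set M) ⊆ (X : Set M) ∨ (I : Set R) ⊆ colR (X : Set M) Set.univ

/-- `powAct X n = X (X :_R M)ⁿ`. -/
def powAct (X : Submodule Rᵐᵒᵖ M) : ℕ → Submodule Rᵐᵒᵖ M
  | 0 => X
  | n + 1 => sProd (powAct X n : Set M) ((colR (X : Set M) Set.univ : Set R))

/-- The product of two sets of ring elements: all finite sums `Σ aᵢbᵢ`, `aᵢ ∈ A`, `bᵢ ∈ B`. -/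
def idMul (A B : Set R) : Set R :=
  (AddSubmonoid.closure {x | ∃ a ∈ A, ∃ b ∈ B, x = a * b} : AddSubmonoid R)

/-- A prime (two-sided) ideal of a possibly noncommutative ring. -/
def TIPrime (P : TwoSidedIdeal R) : Prop :=
  (P : Set R) ≠ Set.univ ∧ ∀ I J : TwoSidedIdeal R,
    idMul (I : Set R) (J : Set R) ⊆ (P : Set R) →
    (I : Set R) ⊆ (P : Set R) ∨ (J : Set R) ⊆ (P : Set R)

/-- The radical `√A`: the intersection of all prime two-sided ideals containing `A`. -/
def radSet (A : Set R) : Set R :=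
  {x | ∀ P : TwoSidedIdeal R, TIPrime P → A ⊆ (P : Set R) → x ∈ (P : Set R)}

/-- A ψ-prime two-sided ideal of a possibly noncommutative ring. -/
def PsiPrime (ψ : TwoSidedIdeal R → Set R) (A : TwoSidedIdeal R) : Prop :=
  (A : Set R) ≠ Set.univ ∧ ∀ I J : TwoSidedIdeal R,
    idMul (I : Set R) (J : Set R) ⊆ (A : Set R) →
    ¬(idMul (I : Set R) (J : Set R) ⊆ ψ A) →
    (I : Set R) ⊆ (A : Set R) ∨ (J : Set R) ⊆ (A : Set R)

/-- The induced function `φ_Y` on submodules of `M/Y`: `φ_Y(X/Y) = (φ(X)+Y)/Y`. -/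
def phiQuot (φ : Submodule Rᵐᵒᵖ M → Set M) (Y : Submodule Rᵐᵒᵖ M) :
    Submodule Rᵐᵒᵖ (M ⧸ Y) → Set (M ⧸ Y) :=
  fun Q => Y.mkQ '' (φ (Q.comap Y.mkQ))

/-- The colon `(X :_R Y)` of two submodules, as a two-sided ideal of `R`. -/
def colTI (X Y : Submodule Rᵐᵒᵖ M) : TwoSidedIdeal R :=
  TwoSidedIdeal.mk' (colR (X : Set M) (Y : Set M))
    (by intro m hm; simp)
    (by intro x y hx hy m hm
        rw [op_add, add_smul]
        exact X.add_mem (hx m hm) (hy m hm))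
    (by intro x hx m hm
        rw [op_neg, neg_smul]
        exact X.neg_mem (hx m hm))
    (by intro x y hy m hm
        rw [op_mul, mul_smul]
        exact hy _ (Y.smul_mem (op x) hm))
    (by intro x y hx m hm
        rw [op_mul, mul_smul]
        exact X.smul_mem (op y) (hx m hm))

/-- The colon `(X :_M I)` as a submodule of `M`, for a two-sided ideal `I`. -/
def colMS (X : Submodule Rᵐᵒᵖ M) (I : TwoSidedIdeal R) : Submodule Rᵐᵒᵖ M where
  carrier := colM (X : Set M) (I : Set R)
  add_mem' := by
    intro a b ha hb r hr
    rw [smul_add]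
    exact X.add_mem (ha r hr) (hb r hr)
  zero_mem' := by
    intro r hr
    rw [smul_zero]
    exact X.zero_mem
  smul_mem' := by
    intro c m hm r hr
    rw [← mul_smul, show op r * c = op (unop c * r) from by rw [op_mul, op_unop]]
    exact hm _ (I.mul_mem_left _ _ hr)

/-- `M` is a multiplication right `R`-module: every submodule `X` equals `M(X :_R M)`. -/
def IsMultiplication (R : Type*) [Ring R] (M : Type*) [AddCommGroup M]
    [Module Rᵐᵒᵖ M] : Prop :=
  ∀ X : Submodule Rᵐᵒᵖ M, X = sProd (Set.univ : Set M) ((colR (X : Set M) Set.univ : Set R))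

/-- The product `XY = M(X :_R M)(Y :_R M)` of two submodules of a multiplication module. -/
def mprod (X Y : Submodule Rᵐᵒᵖ M) : Submodule Rᵐᵒᵖ M :=
  sProd ((sProd (Set.univ : Set M) ((colR (X : Set M) Set.univ : Set R)) : Submodule Rᵐᵒᵖ M) : Set M)
    ((colR (Y : Set M) Set.univ : Set R))

/-- A φ-m-system in a right `R`-module `M`. -/
def PhiMSystem (φ : Submodule Rᵐᵒᵖ M → Set M) (S : Set M) : Prop :=
  S.Nonempty ∧ ∀ (Y₁ Y₂ : Submodule Rᵐᵒᵖ M) (I : TwoSidedIdeal R),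
    ((Y₁ ⊔ Y₂ : Submodule Rᵐᵒᵖ M) : Set M) ∩ S ≠ ∅ →
    ((Y₁ ⊔ sProd (Set.univ : Set M) (I : Set R) : Submodule Rᵐᵒᵖ M) : Set M) ∩ S ≠ ∅ →
    ¬((sProd (Y₂ : Set M) (I : Set R) : Set M) ⊆ φ (Submodule.span Rᵐᵒᵖ Sᶜ)) →
    ((Y₁ ⊔ sProd (Y₂ : Set M) (I : Set R) : Submodule Rᵐᵒᵖ M) : Set M) ∩ S ≠ ∅

/-- Sum of two two-sided ideals, as a two-sided ideal. -/
def addTI (A B : TwoSidedIdeal R) : TwoSidedIdeal R :=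
  TwoSidedIdeal.mk' {x | ∃ a ∈ A, ∃ b ∈ B, x = a + b}
    (⟨0, A.zero_mem, 0, B.zero_mem, by simp⟩)
    (by rintro x y ⟨a, ha, b, hb, rfl⟩ ⟨a', ha', b', hb', rfl⟩
        exact ⟨a + a', A.add_mem ha ha', b + b', B.add_mem hb hb', by abel⟩)
    (by rintro x ⟨a, ha, b, hb, rfl⟩
        exact ⟨-a, A.neg_mem ha, -b, B.neg_mem hb, by abel⟩)
    (by rintro x y ⟨a, ha, b, hb, rfl⟩
        exact ⟨x * a, A.mul_mem_left _ _ ha, x * b, B.mul_mem_left _ _ hb, mul_add _ _ _⟩)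
    (by rintro x y ⟨a, ha, b, hb, rfl⟩
        exact ⟨a * y, A.mul_mem_right _ _ ha, b * y, B.mul_mem_right _ _ hb, add_mul _ _ _⟩)

/-- The colon ideal `(X :_R M)` as a two-sided ideal. -/
def colAll (X : Submodule Rᵐᵒᵖ M) : TwoSidedIdeal R :=
  TwoSidedIdeal.mk' (colR (X : Set M) Set.univ)
    (by intro m _; simp)
    (by intro x y hx hy m hm
        rw [op_add, add_smul]
        exact X.add_mem (hx m hm) (hy m hm))
    (by intro x hx m hm
        rw [op_neg, neg_smul]
        exact X.neg_mem (hx m hm))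
    (by intro x y hy m _
        rw [op_mul, mul_smul]
        exact hy _ trivial)
    (by intro x y hx m _
        rw [op_mul, mul_smul]
        exact X.smul_mem (op y) (hx m trivial))

lemma mem_colAll {X : Submodule Rᵐᵒᵖ M} {r : R} :
    r ∈ colAll X ↔ r ∈ colR (X : Set M) Set.univ := by
  exact TwoSidedIdeal.mem_mk' _ _ _ _ _ _ _

lemma mem_addTI {A B : TwoSidedIdeal R} {x : R} :
    x ∈ addTI A B ↔ ∃ a ∈ A, ∃ b ∈ B, x = a + b := by
  simp [addTI, TwoSidedIdeal.mem_mk']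

/-- Let `I` be a maximal (two-sided) ideal of `R`. Then either
`MI = M` or `MI` is a φ-prime submodule of `M`. -/
theorem stmt_13 (φ : Submodule Rᵐᵒᵖ M → Set M) (hφ : GoodPhi φ)
    (I : TwoSidedIdeal R) (hproper : (I : Set R) ≠ Set.univ)
    (hmax : ∀ J : TwoSidedIdeal R, (I : Set R) ⊂ (J : Set R) → (J : Set R) = Set.univ) :
    sProd (Set.univ : Set M) (I : Set R) = ⊤ ∨
      PhiPrime φ (sProd (Set.univ : Set M) (I : Set R)) := by
  by_cases htop : sProd (Set.univ : Set M) (I : Set R) = ⊤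
  · exact Or.inl htop
  right
  set X := sProd (Set.univ : Set M) (I : Set R) with hX
  refine ⟨htop, ?_⟩
  intro Y J hsub _
  -- I ⊆ colAll X
  have hIC : (I : Set R) ⊆ (colAll X : TwoSidedIdeal R) := by
    intro r hr
    rw [SetLike.mem_coe, mem_colAll]
    intro m _
    exact Submodule.subset_span ⟨m, trivial, r, hr, rfl⟩
  by_cases hJC : (J : Set R) ⊆ colR (X : Set M) Set.univ
  · exact Or.inr hJC
  left
  obtain ⟨j, hjJ, hjC⟩ := Set.not_subset.mp hJC
  have hjC' : j ∉ colAll X := fun h => hjC (mem_colAll.mp h)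
  -- I ⊊ colAll X + J
  have hstrict : (I : Set R) ⊂ ((addTI (colAll X) J : TwoSidedIdeal R) : Set R) := by
    constructor
    · intro r hr
      rw [SetLike.mem_coe, mem_addTI]
      exact ⟨r, hIC hr, 0, J.zero_mem, (add_zero r).symm⟩
    · intro hcon
      have hjmem : j ∈ addTI (colAll X) J :=
        mem_addTI.mpr ⟨0, (colAll X).zero_mem, j, hjJ, (zero_add j).symm⟩
      have : j ∈ (I : Set R) := hcon hjmem
      exact hjC' (hIC this)
  have huniv := hmax _ hstrict
  have h1 : (1 : R) ∈ addTI (colAll X) J := by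
    have : (1 : R) ∈ ((addTI (colAll X) J : TwoSidedIdeal R) : Set R) := by
      rw [huniv]; trivial
    exact this
  obtain ⟨c, hc, b, hb, h1eq⟩ := mem_addTI.mp h1
  intro y hy
  have : y = op c • y + op b • y := by
    rw [← add_smul, ← op_add, ← h1eq, op_one, one_smul]
  rw [SetLike.mem_coe, this]
  refine X.add_mem ?_ ?_
  · exact mem_colAll.mp hc y trivial
  · exact hsub (Submodule.subset_span ⟨y, hy, b, hb, rfl⟩)
end

section
/- Let X be a proper submodule of M and ψ : S(R) → S(R) ∪ {∅} a function. If X is a φ-prime submodule of M, then for every submodule Y of M with Y ⊄ X and (φ(X):_R Y) ⊆ ψ((X:_R Y)), the ideal (X:_R Y) is a ψ-prime ideal of R. -/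
open MulOpposite Submodule

variable {R : Type*} [Ring R] {M : Type*} [AddCommGroup M] [Module Rᵐᵒᵖ M]

lemma mem_colTI {X Y : Submodule Rᵐᵒᵖ M} {x : R} :
    x ∈ colTI X Y ↔ x ∈ colR (X : Set M) (Y : Set M) :=
  TwoSidedIdeal.mem_mk' _ _ _ _ _ _ _

/-- Let `X` be a proper submodule of `M` and
`ψ : S(R) → S(R) ∪ {∅}`. If `X` is φ-prime, then for every submodule `Y ⊄ X` with
`(φ(X) :_R Y) ⊆ ψ((X :_R Y))`, the ideal `(X :_R Y)` is a ψ-prime ideal of `R`. -/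
theorem stmt_14 (φ : Submodule Rᵐᵒᵖ M → Set M) (hφ : GoodPhi φ)
    (ψ : TwoSidedIdeal R → Set R)
    (X : Submodule Rᵐᵒᵖ M) (hXp : PhiPrime φ X) :
    ∀ Y : Submodule Rᵐᵒᵖ M, ¬((Y : Set M) ⊆ (X : Set M)) →
      (colR (φ X) (Y : Set M) : Set R) ⊆ ψ (colTI X Y) →
      PsiPrime ψ (colTI X Y) := by
  intro Y hYX hpsi
  obtain ⟨y0, hy0Y, hy0X⟩ := Set.not_subset.1 hYX
  constructor
  · intro h
    have h1 : (1 : R) ∈ colTI X Y := by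
      have : (1 : R) ∈ (colTI X Y : Set R) := h ▸ Set.mem_univ 1
      exact this
    have := (mem_colTI.1 h1) y0 hy0Y
    rw [op_one, one_smul] at this
    exact hy0X this
  · intro I J hIJ hnpsi
    set Y' := sProd (Y : Set M) (I : Set R) with hY'
    have hsub1 : ∀ z ∈ Y', ∀ b ∈ J, op b • z ∈ X := by
      intro z hz
      have : z ∈ colMS X J := by
        refine Submodule.span_le.2 ?_ hz
        rintro w ⟨y, hy, a, ha, rfl⟩
        intro b hb
        rw [← mul_smul, ← op_mul]
        have hab : a * b ∈ idMul (I : Set R) (J : Set R) :=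
          AddSubmonoid.subset_closure ⟨a, ha, b, hb, rfl⟩
        exact mem_colTI.1 (hIJ hab) y hy
      exact this
    have hXsub : (sProd (Y' : Set M) (J : Set R) : Set M) ⊆ (X : Set M) := by
      apply Submodule.span_le.2
      rintro z ⟨m, hm, b, hb, rfl⟩
      exact hsub1 m hm b hb
    have hnphi : ¬ ((sProd (Y' : Set M) (J : Set R) : Set M) ⊆ φ X) := by
      intro hcon
      apply hnpsi
      intro x hx
      apply hpsi
      intro m hm
      apply hcon
      have hx' : x ∈ AddSubmonoid.closure
          {x | ∃ a ∈ (I : Set R), ∃ b ∈ (J : Set R), x = a * b} := hx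
      induction hx' using AddSubmonoid.closure_induction with
      | mem w hw =>
        obtain ⟨a, ha, b, hb, rfl⟩ := hw
        have h1 : op a • m ∈ Y' := Submodule.subset_span ⟨m, hm, a, ha, rfl⟩
        have : op b • (op a • m) ∈ sProd (Y' : Set M) (J : Set R) :=
          Submodule.subset_span ⟨_, h1, b, hb, rfl⟩
        rwa [← mul_smul, ← op_mul] at this
      | zero => rw [op_zero, zero_smul]; exact Submodule.zero_mem _
      | add u v hum hvm hu hv =>
        rw [op_add, add_smul]
        exact Submodule.add_mem _ (hu hum) (hv hvm)
    rcases hXp.2 Y' J hXsub hnphi with h | h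
    · left
      intro a ha
      have : a ∈ colTI X Y := mem_colTI.2 fun m hm =>
        h (Submodule.subset_span ⟨m, hm, a, ha, rfl⟩)
      exact this
    · right
      intro b hb
      have : b ∈ colTI X Y := mem_colTI.2 fun m _ => h hb m (Set.mem_univ m)
      exact this
end

section
/- Let M be a multiplication R-module and X a φ-prime submodule of M. Then for all submodules Y₁, Y₂ of M, if Y₁Y₂ ⊆ X and Y₁Y₂ ⊄ φ(X), then Y₁ ⊆ X or Y₂ ⊆ X. -/
open MulOpposite Submodule

variable {R : Type*} [Ring R] {M : Type*} [AddCommGroup M] [Module Rᵐᵒᵖ M]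

/-- Let `M` be a multiplication module and `X` a φ-prime submodule
of `M`. Then for all submodules `Y₁, Y₂` of `M`, if `Y₁Y₂ ⊆ X` and `Y₁Y₂ ⊄ φ(X)`,
then `Y₁ ⊆ X` or `Y₂ ⊆ X`. -/
theorem stmt_15 (hm : IsMultiplication R M)
    (φ : Submodule Rᵐᵒᵖ M → Set M) (hφ : GoodPhi φ)
    (X : Submodule Rᵐᵒᵖ M) (hX : PhiPrime φ X) :
    ∀ Y₁ Y₂ : Submodule Rᵐᵒᵖ M,
      (mprod Y₁ Y₂ : Set M) ⊆ (X : Set M) →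
      ¬((mprod Y₁ Y₂ : Set M) ⊆ φ X) →
      (Y₁ : Set M) ⊆ (X : Set M) ∨ (Y₂ : Set M) ⊆ (X : Set M) := by
  intro Y₁ Y₂ hsub hnsub
  have key : mprod Y₁ Y₂ = sProd (Y₁ : Set M) (colR (Y₂ : Set M) Set.univ) := by
    unfold mprod
    rw [← hm Y₁]
  set I := colTI Y₂ (⊤ : Submodule Rᵐᵒᵖ M) with hI
  have hIcoe : (I : Set R) = colR (Y₂ : Set M) Set.univ := by
    ext r
    simp [hI, colTI, TwoSidedIdeal.mem_mk', colR, SetLike.mem_coe]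
  rcases hX.2 Y₁ I (by rw [hIcoe, ← key]; exact hsub)
      (by rw [hIcoe, ← key]; exact hnsub) with h | h
  · exact Or.inl h
  · right
    have h2 : (colR (Y₂ : Set M) Set.univ : Set R) ⊆ colR (X : Set M) Set.univ := by
      rw [← hIcoe]; exact h
    have := hm Y₂
    rw [this]
    intro z hz
    have hz' : z ∈ sProd (Set.univ : Set M) (colR (Y₂ : Set M) Set.univ) := hz
    refine Submodule.span_le.mpr ?_ hz'
    rintro w ⟨y, -, a, ha, rfl⟩
    exact h2 ha y trivial
end

section
/- Let M be a multiplication and cancellation R-module and X a proper submodule of M. Then X is a φ-prime submodule of M if and only if for all submodules Y₁, Y₂ of M, Y₁Y₂ ⊆ X and Y₁Y₂ ⊄ φ(X) imply Y₁ ⊆ X or Y₂ ⊆ X. -/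
open MulOpposite Submodule

variable {R : Type*} [Ring R] {M : Type*} [AddCommGroup M] [Module Rᵐᵒᵖ M]

/-- Let `M` be a multiplication and cancellation module and `X` a
proper submodule of `M`. Then `X` is φ-prime iff for all submodules `Y₁, Y₂`,
`Y₁Y₂ ⊆ X` and `Y₁Y₂ ⊄ φ(X)` imply `Y₁ ⊆ X` or `Y₂ ⊆ X`. -/
theorem stmt_16 (hm : IsMultiplication R M)
    (hc : ∀ I J : TwoSidedIdeal R,
      sProd (Set.univ : Set M) (I : Set R) = sProd (Set.univ : Set M) (J : Set R) →
      I = J)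
    (φ : Submodule Rᵐᵒᵖ M → Set M) (hφ : GoodPhi φ)
    (X : Submodule Rᵐᵒᵖ M) (hX : X ≠ ⊤) :
    PhiPrime φ X ↔
      ∀ Y₁ Y₂ : Submodule Rᵐᵒᵖ M,
        (mprod Y₁ Y₂ : Set M) ⊆ (X : Set M) →
        ¬((mprod Y₁ Y₂ : Set M) ⊆ φ X) →
        (Y₁ : Set M) ⊆ (X : Set M) ∨ (Y₂ : Set M) ⊆ (X : Set M) := by
  have coe_colTI_top : ∀ Z : Submodule Rᵐᵒᵖ M,
      ((colTI Z ⊤ : TwoSidedIdeal R) : Set R) = colR (Z : Set M) Set.univ := by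
    intro Z
    ext r
    rw [SetLike.mem_coe]
    show r ∈ TwoSidedIdeal.mk' _ _ _ _ _ _ ↔ _
    refine (TwoSidedIdeal.mem_mk' ..).trans ?_
    simp [colR]
  constructor
  · rintro ⟨-, hp⟩ Y₁ Y₂ h1 h2
    unfold mprod at h1 h2
    rw [← hm Y₁] at h1 h2
    rw [← coe_colTI_top Y₂] at h1 h2
    rcases hp Y₁ (colTI Y₂ ⊤) h1 h2 with h | h
    · exact Or.inl h
    · right
      rw [coe_colTI_top Y₂] at h
      intro y hy
      have hy' : y ∈ (sProd (Set.univ : Set M)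
          ((colR (Y₂ : Set M) Set.univ : Set R)) : Submodule Rᵐᵒᵖ M) := by
        rw [← hm Y₂]; exact hy
      refine Submodule.span_le.2 ?_ hy'
      rintro z ⟨m, -, a, ha, rfl⟩
      exact h ha m trivial
  · intro H
    refine ⟨hX, ?_⟩
    intro Y I h1 h2
    have hid : (I : Set R) =
        colR ((sProd (Set.univ : Set M) (I : Set R) : Submodule Rᵐᵒᵖ M) : Set M)
          Set.univ := by
      have h := hc I (colTI (sProd (Set.univ : Set M) (I : Set R)) ⊤) ?_
      · conv_lhs => rw [h, coe_colTI_top]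
      · rw [coe_colTI_top]
        exact hm _
    have e : mprod Y (sProd (Set.univ : Set M) (I : Set R)) =
        sProd (Y : Set M) (I : Set R) := by
      unfold mprod
      rw [← hm Y, ← hid]
    rcases H Y (sProd (Set.univ : Set M) (I : Set R))
        (by rw [e]; exact h1) (by rw [e]; exact h2) with h | h
    · exact Or.inl h
    · right
      intro r hr m _
      exact h (Submodule.subset_span ⟨m, trivial, r, hr, rfl⟩)
end

section
/- Let M be a multiplication R-module, X a proper submodule of M, and ψ : S(R) → S(R) ∪ {∅} a function with (φ(X):_R M) = ψ((X:_R M)). Then X is a φ-prime submodule of M if and only if (X:_R M) is a ψ-prime ideal of R. -/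
open MulOpposite Submodule

variable {R : Type*} [Ring R] {M : Type*} [AddCommGroup M] [Module Rᵐᵒᵖ M]

lemma colTI_top_coe (X : Submodule Rᵐᵒᵖ M) :
    (colTI X ⊤ : Set R) = colR (X : Set M) Set.univ := by
  ext r
  constructor
  · intro h m _
    exact (TwoSidedIdeal.mem_mk' _ _ _ _ _ _ _).mp h m trivial
  · intro h
    exact (TwoSidedIdeal.mem_mk' _ _ _ _ _ _ _).mpr (fun m _ => h m trivial)

lemma sProd_subset_iff (X : Submodule Rᵐᵒᵖ M) (Y : Set M) (A : Set R) :
    (sProd Y A : Set M) ⊆ (X : Set M) ↔ ∀ y ∈ Y, ∀ a ∈ A, op a • y ∈ X := by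
  constructor
  · intro h y hy a ha
    exact h (Submodule.subset_span ⟨y, hy, a, ha, rfl⟩)
  · intro h
    exact Submodule.span_le.mpr (by rintro z ⟨y, hy, a, ha, rfl⟩; exact h y hy a ha)

lemma sProd_univ_subset_iff (X : Submodule Rᵐᵒᵖ M) (A : Set R) :
    (sProd (Set.univ : Set M) A : Set M) ⊆ (X : Set M) ↔
      A ⊆ colR (X : Set M) Set.univ := by
  rw [sProd_subset_iff]
  constructor
  · intro h a ha m _
    exact h m trivial a ha
  · intro h y _ a ha
    exact h ha y trivial

/-- `colR X univ` as an `AddSubmonoid`. -/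
def colRAdd (X : Submodule Rᵐᵒᵖ M) : AddSubmonoid R where
  carrier := colR (X : Set M) Set.univ
  zero_mem' := by
    intro m _
    simp
  add_mem' := by
    intro a b ha hb m hm
    rw [op_add, add_smul]
    exact X.add_mem (ha m hm) (hb m hm)

lemma key (X : Submodule Rᵐᵒᵖ M) (I J : TwoSidedIdeal R) :
    (sProd ((sProd (Set.univ : Set M) (I : Set R) : Submodule Rᵐᵒᵖ M) : Set M)
      (J : Set R) : Set M) ⊆ (X : Set M) ↔
      idMul (I : Set R) (J : Set R) ⊆ colR (X : Set M) Set.univ := by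
  constructor
  · intro h
    have : AddSubmonoid.closure {x | ∃ a ∈ (I : Set R), ∃ b ∈ (J : Set R), x = a * b}
        ≤ colRAdd X := by
      apply AddSubmonoid.closure_le.mpr
      rintro x ⟨a, ha, b, hb, rfl⟩
      intro m _
      rw [op_mul, mul_smul]
      exact h (Submodule.subset_span
        ⟨op a • m, Submodule.subset_span ⟨m, trivial, a, ha, rfl⟩, b, hb, rfl⟩)
    exact this
  · intro h
    apply (sProd_subset_iff X _ _).mpr
    intro y hy b hb
    have hy' : y ∈ (sProd (Set.univ : Set M) (I : Set R) : Submodule Rᵐᵒᵖ M) := hy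
    have : (sProd (Set.univ : Set M) (I : Set R) : Submodule Rᵐᵒᵖ M) ≤ colMS X J := by
      apply Submodule.span_le.mpr
      rintro z ⟨m, -, a, ha, rfl⟩
      intro c hc
      rw [← mul_smul, ← op_mul]
      exact h (AddSubmonoid.subset_closure ⟨a, ha, c, hc, rfl⟩) m trivial
    exact this hy' b hb

lemma colR_empty : (colR (∅ : Set M) Set.univ : Set R) = ∅ := by
  ext r
  simp only [colR, Set.mem_setOf_eq, Set.mem_empty_iff_false]
  exact iff_of_false (fun h => h 0 trivial) (fun h => h.elim)

/-- Let `M` be a multiplication module, `X` a proper submodule of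
`M`, `ψ : S(R) → S(R) ∪ {∅}` with `(φ(X) :_R M) = ψ((X :_R M))`. Then `X` is
φ-prime in `M` iff `(X :_R M)` is a ψ-prime ideal of `R`. -/
theorem stmt_17 (hm : IsMultiplication R M)
    (φ : Submodule Rᵐᵒᵖ M → Set M) (hφ : GoodPhi φ)
    (ψ : TwoSidedIdeal R → Set R)
    (X : Submodule Rᵐᵒᵖ M) (hX : X ≠ ⊤)
    (hψφ : (colR (φ X) Set.univ : Set R) = ψ (colTI X ⊤)) :
    PhiPrime φ X ↔ PsiPrime ψ (colTI X ⊤) := by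
  have hcoe : (colTI X ⊤ : Set R) = colR (X : Set M) Set.univ := colTI_top_coe X
  constructor
  · rintro ⟨-, hp⟩
    refine ⟨?_, ?_⟩
    · rw [hcoe]
      intro h
      apply hX
      rw [eq_top_iff]
      intro m _
      have h1 : (1 : R) ∈ colR (X : Set M) Set.univ := h ▸ Set.mem_univ _
      simpa using h1 m trivial
    · intro I J hIJ hnot
      rw [hcoe] at hIJ
      have h1 : (sProd ((sProd (Set.univ : Set M) (I : Set R) : Submodule Rᵐᵒᵖ M) : Set M)
          (J : Set R) : Set M) ⊆ (X : Set M) := (key X I J).mpr hIJ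
      have h2 : ¬ ((sProd ((sProd (Set.univ : Set M) (I : Set R) : Submodule Rᵐᵒᵖ M) : Set M)
          (J : Set R) : Set M) ⊆ φ X) := by
        intro hc
        rcases (hφ X).2 with he | ⟨P, hP⟩
        · rw [he] at hc
          exact absurd (hc (Submodule.zero_mem _)) (Set.notMem_empty _)
        · rw [hP] at hc
          apply hnot
          rw [← hψφ, hP]
          exact (key P I J).mp hc
      rcases hp _ J h1 h2 with hY | hJ
      · left
        rw [hcoe]
        exact (sProd_univ_subset_iff X _).mp hY
      · right
        rw [hcoe]
        exact hJ
  · rintro ⟨-, hp⟩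
    refine ⟨hX, ?_⟩
    intro Y J hYJ hnot
    set I : TwoSidedIdeal R := colTI Y ⊤ with hI
    have hYcoe : (I : Set R) = colR (Y : Set M) Set.univ := colTI_top_coe Y
    have hYI : (sProd (Set.univ : Set M) (I : Set R) : Submodule Rᵐᵒᵖ M) = Y := by
      rw [hYcoe]
      exact (hm Y).symm
    have h1 : idMul (I : Set R) (J : Set R) ⊆ (colTI X ⊤ : Set R) := by
      rw [hcoe]
      apply (key X I J).mp
      rw [hYI]
      exact hYJ
    have h2 : ¬ (idMul (I : Set R) (J : Set R) ⊆ ψ (colTI X ⊤)) := by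
      intro hc
      rw [← hψφ] at hc
      rcases (hφ X).2 with he | ⟨P, hP⟩
      · rw [he, colR_empty] at hc
        exact absurd (hc (AddSubmonoid.zero_mem _)) (Set.notMem_empty _)
      · rw [hP] at hc
        apply hnot
        rw [hP, ← hYI]
        exact (key P I J).mpr hc
    rcases hp I J h1 h2 with hIX | hJX
    · left
      rw [← hYI]
      refine (sProd_univ_subset_iff X _).mpr ?_
      rw [← hcoe]
      exact hIX
    · right
      rw [hcoe] at hJX
      exact hJX
end

section
/- Let X be a proper submodule of M. Then X is a φ-prime submodule of M if and only if S = M − X is a φ-m-system. -/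
open MulOpposite Submodule

variable {R : Type*} [Ring R] {M : Type*} [AddCommGroup M] [Module Rᵐᵒᵖ M]

/-- Let `X` be a proper submodule of `M`. Then `X` is a φ-prime
submodule of `M` iff `S = M − X` is a φ-m-system. -/
theorem stmt_19 (φ : Submodule Rᵐᵒᵖ M → Set M) (hφ : GoodPhi φ)
    (X : Submodule Rᵐᵒᵖ M) (hX : X ≠ ⊤) :
    PhiPrime φ X ↔ PhiMSystem φ ((X : Set M)ᶜ) := by
  have hspan : Submodule.span Rᵐᵒᵖ (((X : Set M)ᶜ)ᶜ) = X := by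
    rw [compl_compl]; exact Submodule.span_eq X
  have hex : ∃ m, m ∉ X := by
    by_contra h; push_neg at h; exact hX (eq_top_iff.mpr fun m _ => h m)
  have hinter : ∀ (N : Submodule Rᵐᵒᵖ M),
      ((N : Set M) ∩ (X : Set M)ᶜ ≠ ∅) ↔ ¬ (N : Set M) ⊆ (X : Set M) := by
    intro N
    constructor
    · intro h hsub
      apply h
      ext m
      simp only [Set.mem_inter_iff, Set.mem_compl_iff, Set.mem_empty_iff_false, iff_false]
      rintro ⟨hm, hmx⟩
      exact hmx (hsub hm)
    · intro h he
      apply h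
      intro m hm
      by_contra hmx
      have : m ∈ ((N : Set M) ∩ (X : Set M)ᶜ) := ⟨hm, hmx⟩
      rw [he] at this
      exact this
  constructor
  · rintro ⟨-, hprime⟩
    refine ⟨hex, ?_⟩
    intro Y₁ Y₂ I h1 h2 h3
    rw [hinter] at h1 h2 ⊢
    intro hsub
    have hY2I : (sProd (Y₂ : Set M) (I : Set R) : Set M) ⊆ (X : Set M) := by
      intro z hz
      exact hsub (le_sup_right (α := Submodule Rᵐᵒᵖ M) hz)
    rw [hspan] at h3
    rcases hprime Y₂ I hY2I h3 with h | h
    · apply h1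
      intro z hz
      rcases Submodule.mem_sup.mp hz with ⟨a, ha, b, hb, rfl⟩
      exact X.add_mem (hsub (le_sup_left (α := Submodule Rᵐᵒᵖ M) ha)) (h hb)
    · apply h2
      intro z hz
      rcases Submodule.mem_sup.mp hz with ⟨a, ha, b, hb, rfl⟩
      refine X.add_mem (hsub (le_sup_left (α := Submodule Rᵐᵒᵖ M) ha)) ?_
      -- b ∈ sProd univ I, I ⊆ colR X univ, so b ∈ X
      have : sProd (Set.univ : Set M) (I : Set R) ≤ X := by
        rw [sProd]
        apply Submodule.span_le.mpr
        rintro z ⟨y, -, a, haI, rfl⟩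
        exact h haI y trivial
      exact this hb
  · rintro ⟨-, hsys⟩
    refine ⟨hX, ?_⟩
    intro Y I hsub hnphi
    by_contra h
    push_neg at h
    obtain ⟨hY, hI⟩ := h
    have h1 : ¬ (((⊥ : Submodule Rᵐᵒᵖ M) ⊔ Y : Submodule Rᵐᵒᵖ M) : Set M) ⊆ (X : Set M) := by
      rw [bot_sup_eq]; exact hY
    have h2 : ¬ (((⊥ : Submodule Rᵐᵒᵖ M) ⊔ sProd (Set.univ : Set M) (I : Set R) : Submodule Rᵐᵒᵖ M) : Set M) ⊆ (X : Set M) := by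
      rw [bot_sup_eq]
      intro hMI
      apply hI
      intro r hrI m _
      exact hMI (Submodule.subset_span ⟨m, trivial, r, hrI, rfl⟩)
    have h3 : ¬((sProd (Y : Set M) (I : Set R) : Set M) ⊆ φ (Submodule.span Rᵐᵒᵖ (((X : Set M)ᶜ)ᶜ))) := by
      rw [hspan]; exact hnphi
    have := hsys ⊥ Y I ((hinter _).mpr h1) ((hinter _).mpr h2) h3
    rw [hinter, bot_sup_eq] at this
    exact this hsub
end
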